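/- Let N ≥ 2, let U', V' ∈ ℝ^N be vectors whose first two components vanish, let a, b, c, d ∈ ℝ with a ≠ 0 and d ≠ 0, and set U = a·e₁ + b·e₂ + U' and V = c·e₁ + d·e₂ + V'. Consider the vector fields X_α(x) = exp(x₁)·U and X_β(x) = exp(x₂)·V on ℝ^N. If [X_α, X_β] ≠ 0, [[X_α, X_β], X_α] = 0 and [[X_α, X_β], X_β] = 0 (the bracket relations of simple root vectors in a root system of type A₂), then either (b = 0 and c = −d) or (b = −a and c = 0); that is, up to nonzero constant multiples, X_α = exp(x₁)(∂₁ + U₁) and X_β = exp(x₂)(∂₁ − ∂₂ + V₁), or X_α = exp(x₁)(∂₁ − ∂₂ + U₁) and X_β = exp(x₂)(∂₂ + V₁), with U₁, V₁ constant vector fields whose first two components vanish. -/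

import Mathlib

set_option maxHeartbeats 1000000
set_option synthInstance.maxHeartbeats 400000

noncomputable section

private lemma expField_hasFDerivAt {N : ℕ} (f : (Fin N → ℝ) →L[ℝ] ℝ) (u : Fin N → ℝ)
    (x : Fin N → ℝ) :
    HasFDerivAt (fun y => Real.exp (f y) • u) ((Real.exp (f x) • f).smulRight u) x :=
  (f.hasFDerivAt.exp).smul_const u

private lemma bracket_expFields {N : ℕ} (f g : (Fin N → ℝ) →L[ℝ] ℝ) (u v : Fin N → ℝ) :
    VectorField.lieBracket ℝ (fun y => Real.exp (f y) • u) (fun y => Real.exp (g y) • v)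
      = fun y => Real.exp (f y + g y) • ((g u) • v - (f v) • u) := by
  funext x
  rw [VectorField.lieBracket, (expField_hasFDerivAt f u x).fderiv,
    (expField_hasFDerivAt g v x).fderiv]
  simp only [ContinuousLinearMap.smulRight_apply, ContinuousLinearMap.smul_apply,
    smul_eq_mul, map_smul, Real.exp_add]
  module


/-- If `X_α x = exp (x₁) • (a e₁ + b e₂ + U')` and `X_β x = exp (x₂) • (c e₁ + d e₂ + V')`,
with `a, d ≠ 0` and `U', V'` supported outside the first two coordinates, satisfy the
`A₂`-type bracket relations `[X_α, X_β] ≠ 0`, `[[X_α, X_β], X_α] = 0` and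
`[[X_α, X_β], X_β] = 0`, then `(b = 0 ∧ c = −d)` or `(b = −a ∧ c = 0)`; that is, up to
nonzero constant multiples, `X_α = exp (x₁)(∂₁ + U₁)`, `X_β = exp (x₂)(∂₁ − ∂₂ + V₁)`
or `X_α = exp (x₁)(∂₁ − ∂₂ + U₁)`, `X_β = exp (x₂)(∂₂ + V₁)`. -/
theorem sl3_simple_root_vectors_normal_form (N : ℕ) (hN : 2 ≤ N)
    (U' V' : Fin N → ℝ)
    (hU'0 : U' ⟨0, by omega⟩ = 0) (hU'1 : U' ⟨1, by omega⟩ = 0)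
    (hV'0 : V' ⟨0, by omega⟩ = 0) (hV'1 : V' ⟨1, by omega⟩ = 0)
    (a b c d : ℝ) (ha : a ≠ 0) (hd : d ≠ 0)
    (Xα Xβ : (Fin N → ℝ) → (Fin N → ℝ))
    (hXα : Xα = fun x => Real.exp (x ⟨0, by omega⟩) •
      (a • (Pi.single (⟨0, by omega⟩ : Fin N) (1 : ℝ) : Fin N → ℝ)
        + b • (Pi.single (⟨1, by omega⟩ : Fin N) (1 : ℝ) : Fin N → ℝ) + U'))
    (hXβ : Xβ = fun x => Real.exp (x ⟨1, by omega⟩) •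
      (c • (Pi.single (⟨0, by omega⟩ : Fin N) (1 : ℝ) : Fin N → ℝ)
        + d • (Pi.single (⟨1, by omega⟩ : Fin N) (1 : ℝ) : Fin N → ℝ) + V'))
    (hne : VectorField.lieBracket ℝ Xα Xβ ≠ 0)
    (h1 : VectorField.lieBracket ℝ (VectorField.lieBracket ℝ Xα Xβ) Xα = 0)
    (h2 : VectorField.lieBracket ℝ (VectorField.lieBracket ℝ Xα Xβ) Xβ = 0) :
    (b = 0 ∧ c = -d) ∨ (b = -a ∧ c = 0) := by
  have h0N : 0 < N := by omega
  have h1N : 1 < N := by omega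
  set i0 : Fin N := ⟨0, h0N⟩ with hi0
  set i1 : Fin N := ⟨1, h1N⟩ with hi1
  have hne01 : i1 ≠ i0 := by simp [hi0, hi1, Fin.ext_iff]
  set U : Fin N → ℝ := a • (Pi.single i0 (1 : ℝ) : Fin N → ℝ)
      + b • (Pi.single i1 (1 : ℝ) : Fin N → ℝ) + U' with hU
  set V : Fin N → ℝ := c • (Pi.single i0 (1 : ℝ) : Fin N → ℝ)
      + d • (Pi.single i1 (1 : ℝ) : Fin N → ℝ) + V' with hV
  have hU0 : U i0 = a := by simp [hU, Pi.single_apply, hne01, hne01.symm, hU'0]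
  have hU1 : U i1 = b := by simp [hU, Pi.single_apply, hne01, hne01.symm, hU'1]
  have hV0 : V i0 = c := by simp [hV, Pi.single_apply, hne01, hne01.symm, hV'0]
  have hV1 : V i1 = d := by simp [hV, Pi.single_apply, hne01, hne01.symm, hV'1]
  set p0 : (Fin N → ℝ) →L[ℝ] ℝ := ContinuousLinearMap.proj i0 with hp0
  set p1 : (Fin N → ℝ) →L[ℝ] ℝ := ContinuousLinearMap.proj i1 with hp1
  have hXα' : Xα = fun y => Real.exp (p0 y) • U := by rw [hXα]; rfl
  have hXβ' : Xβ = fun y => Real.exp (p1 y) • V := by rw [hXβ]; rfl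
  set W : Fin N → ℝ := b • V - c • U with hWdef
  have hbr : VectorField.lieBracket ℝ Xα Xβ
      = fun y => Real.exp (p0 y + p1 y) • W := by
    rw [hXα', hXβ', bracket_expFields]
    simp only [hp0, hp1, ContinuousLinearMap.proj_apply, hU1, hV0, hWdef]
  -- W ≠ 0
  have hWne : W ≠ 0 := by
    intro h
    apply hne
    rw [hbr, h]
    funext y; simp
  -- double brackets
  set q : (Fin N → ℝ) →L[ℝ] ℝ := p0 + p1 with hq
  have hbr' : VectorField.lieBracket ℝ Xα Xβ = fun y => Real.exp (q y) • W := by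
    rw [hbr]; rfl
  have E1 : (W i0) • U - (a + b) • W = 0 := by
    have := h1
    rw [hbr', hXα', bracket_expFields] at this
    have h0 := congrFun this 0
    simp only [hq, hp0, hp1, ContinuousLinearMap.add_apply, ContinuousLinearMap.proj_apply,
      hU0, hU1, Pi.zero_apply] at h0
    simpa using h0
  have E2 : (W i1) • V - (c + d) • W = 0 := by
    have := h2
    rw [hbr', hXβ', bracket_expFields] at this
    have h0 := congrFun this 0
    simp only [hq, hp0, hp1, ContinuousLinearMap.add_apply, ContinuousLinearMap.proj_apply,
      hV0, hV1, Pi.zero_apply] at h0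
    simpa using h0
  have hW0 : W i0 = b * c - c * a := by simp [hWdef, hV0, hU0]
  have hW1 : W i1 = b * d - c * b := by simp [hWdef, hV1, hU1]
  -- scalar equations
  have e10 : (b * c - c * a) * a = (a + b) * (b * c - c * a) := by
    have := congrFun E1 i0
    simp only [Pi.sub_apply, Pi.smul_apply, smul_eq_mul, hU0, hW0, Pi.zero_apply] at this
    linarith
  have e11 : (b * c - c * a) * b = (a + b) * (b * d - c * b) := by
    have := congrFun E1 i1
    simp only [Pi.sub_apply, Pi.smul_apply, smul_eq_mul, hU1, hW0, hW1, Pi.zero_apply] at this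
    linarith
  have e21 : (b * d - c * b) * d = (c + d) * (b * d - c * b) := by
    have := congrFun E2 i1
    simp only [Pi.sub_apply, Pi.smul_apply, smul_eq_mul, hV1, hW1, Pi.zero_apply] at this
    linarith
  -- case analysis
  by_cases hb : b = 0
  · left
    refine ⟨hb, ?_⟩
    subst hb
    have hc : c ≠ 0 := by
      intro hc
      apply hWne
      rw [hWdef, hc]; simp
    -- from E2 : (W i1) • V = (c+d) • W, with W i1 = -c*0 = 0... W i1 = 0*d - c*0 = 0
    have hWi1 : W i1 = 0 := by rw [hW1]; ring
    rw [hWi1, zero_smul, zero_sub, neg_eq_zero] at E2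
    have : (c + d) • W = 0 := E2
    have hcd : c + d = 0 := by
      by_contra h
      exact hWne (by simpa [h] using smul_eq_zero.mp this)
    linarith
  · -- b ≠ 0; first: b*c*(b-a) = 0 from e10, b*c*(d-c)=0 from e21
    have k1 : b * c * (b - a) = 0 := by linear_combination -e10
    have k2 : c * b * (d - c) = 0 := by linear_combination -e21
    by_cases hc : c = 0
    · right
      refine ⟨?_, hc⟩
      subst hc
      -- w1 = b*d ≠ 0, e11 : 0 = (a+b)*(b*d)
      have : (a + b) * (b * d) = 0 := by linear_combination -e11
      have hab : a + b = 0 := by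
        rcases mul_eq_zero.mp this with h | h
        · exact h
        · exact absurd h (mul_ne_zero hb hd)
      linarith
    · -- c ≠ 0 : then b = a and d = c, contradiction
      exfalso
      have hba : b = a := by
        have := mul_eq_zero.mp k1
        rcases this with h | h
        · exact absurd h (mul_ne_zero hb hc)
        · linarith
      have hWi0 : W i0 = 0 := by rw [hW0, hba]; ring
      rw [hWi0, zero_smul, zero_sub, neg_eq_zero] at E1
      have : (a + b) • W = 0 := E1
      have hab : a + b ≠ 0 := by rw [hba]; intro h; apply ha; linarith
      exact hWne (by simpa [hab] using smul_eq_zero.mp this)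

end
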